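/- The function u₂(x) = Σ_{odd n ≥ 1} X^(n)(x)/n! is twice differentiable on (0,a) and satisfies the one-dimensional stationary Schrödinger equation −u₂''(x) + q(x) u₂(x) = 0 for all x ∈ (0,a). -/

import Mathlib

open MeasureTheory Set Filter

/-- The sequence X̃^(n): X̃^(0) ≡ 1; for n ≥ 1, X̃^(n)(x) = n ∫₀ˣ X̃^(n-1)(ξ) dξ
if n is even, and X̃^(n)(x) = n ∫₀ˣ X̃^(n-1)(ξ) q(ξ) dξ if n is odd. -/
noncomputable def Xtilde (q : ℝ → ℂ) : ℕ → ℝ → ℂ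
  | 0 => fun _ => 1
  | n + 1 => fun x => ((n + 1 : ℕ) : ℂ) *
      ∫ ξ in (0:ℝ)..x, Xtilde q n ξ * (if Even (n + 1) then 1 else q ξ)

/-- The sequence X^(n): X^(0) ≡ 1; for n ≥ 1, X^(n)(x) = n ∫₀ˣ X^(n-1)(ξ) q(ξ) dξ
if n is even, and X^(n)(x) = n ∫₀ˣ X^(n-1)(ξ) dξ if n is odd. -/
noncomputable def Xup (q : ℝ → ℂ) : ℕ → ℝ → ℂ
  | 0 => fun _ => 1
  | n + 1 => fun x => ((n + 1 : ℕ) : ℂ) *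
      ∫ ξ in (0:ℝ)..x, Xup q n ξ * (if Even (n + 1) then q ξ else 1)

/-- u₁(x) = Σ_{even n ≥ 0} X̃^(n)(x)/n!, written as a sum over even indices n = 2k. -/
noncomputable def u₁ (q : ℝ → ℂ) (x : ℝ) : ℂ :=
  ∑' k : ℕ, Xtilde q (2 * k) x / (Nat.factorial (2 * k) : ℂ)

/-- u₂(x) = Σ_{odd n ≥ 1} X^(n)(x)/n!, written as a sum over odd indices n = 2k+1. -/
noncomputable def u₂ (q : ℝ → ℂ) (x : ℝ) : ℂ :=
  ∑' k : ℕ, Xup q (2 * k + 1) x / (Nat.factorial (2 * k + 1) : ℂ)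

/- ### Auxiliary material -/

lemma xup_key (q : ℝ → ℂ) (hq : Continuous q) :
    ∀ n : ℕ, Continuous (Xup q n) ∧
      ∀ x : ℝ, HasDerivAt (Xup q (n + 1))
        (((n + 1 : ℕ) : ℂ) * (Xup q n x * (if Even (n + 1) then q x else 1))) x := by
  have key : ∀ n : ℕ, Continuous (Xup q n) →
      (∀ x : ℝ, HasDerivAt (Xup q (n + 1))
        (((n + 1 : ℕ) : ℂ) * (Xup q n x * (if Even (n + 1) then q x else 1))) x) := by
    intro n hc x
    have hgc : Continuous fun ξ => Xup q n ξ * (if Even (n + 1) then q ξ else 1) := by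
      by_cases h : Even (n + 1) <;> simp only [h, if_true, if_false] <;> fun_prop
    exact (intervalIntegral.integral_hasDerivAt_right (hgc.intervalIntegrable 0 x)
      (hgc.stronglyMeasurableAtFilter _ _) hgc.continuousAt).const_mul (((n + 1 : ℕ) : ℂ))
  intro n
  induction n with
  | zero => exact ⟨continuous_const, key 0 continuous_const⟩
  | succ n ih =>
    have hc : Continuous (Xup q (n + 1)) := by
      rw [continuous_iff_continuousAt]
      exact fun x => (key n ih.1 x).differentiableAt.continuousAt
    exact ⟨hc, key (n + 1) hc⟩

lemma xup_bound (q : ℝ → ℂ) (a M : ℝ) (hM1 : 1 ≤ M)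
    (hM : ∀ ξ ∈ Icc (0:ℝ) a, ‖q ξ‖ ≤ M) :
    ∀ n : ℕ, ∀ x ∈ Icc (0:ℝ) a, ‖Xup q n x‖ ≤ M ^ n * x ^ n := by
  have hM0 : 0 ≤ M := le_trans zero_le_one hM1
  intro n
  induction n with
  | zero => intro x hx; simp [Xup]
  | succ n ih =>
    intro x hx
    obtain ⟨hx0, hxa⟩ := hx
    have hb : ∀ t ∈ Set.uIoc (0:ℝ) x, ‖Xup q n t * (if Even (n + 1) then q t else 1)‖
        ≤ M ^ (n + 1) * t ^ n := by
      intro t ht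
      rw [uIoc_of_le hx0] at ht
      have ht0 : (0:ℝ) ≤ t := le_of_lt ht.1
      have ht' : t ∈ Icc (0:ℝ) a := ⟨ht0, le_trans ht.2 hxa⟩
      have h1 : ‖Xup q n t‖ ≤ M ^ n * t ^ n := ih t ht'
      have h2 : ‖(if Even (n + 1) then q t else 1 : ℂ)‖ ≤ M := by
        by_cases h : Even (n + 1)
        · simpa [h] using hM t ht'
        · simpa [h] using hM1
      calc ‖Xup q n t * (if Even (n + 1) then q t else 1)‖
          = ‖Xup q n t‖ * ‖(if Even (n + 1) then q t else 1 : ℂ)‖ := norm_mul _ _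
        _ ≤ (M ^ n * t ^ n) * M := mul_le_mul h1 h2 (norm_nonneg _) (by positivity)
        _ = M ^ (n + 1) * t ^ n := by ring
    have hint : ‖∫ ξ in (0:ℝ)..x, Xup q n ξ * (if Even (n + 1) then q ξ else 1)‖
        ≤ |∫ t in (0:ℝ)..x, M ^ (n + 1) * t ^ n| := by
      apply intervalIntegral.norm_integral_le_abs_of_norm_le
      · exact (ae_restrict_iff' measurableSet_uIoc).mpr (ae_of_all _ hb)
      · exact (Continuous.intervalIntegrable (by continuity) 0 x)
    have hval : ∫ t in (0:ℝ)..x, M ^ (n + 1) * t ^ n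
        = M ^ (n + 1) * (x ^ (n + 1) / (n + 1)) := by
      rw [intervalIntegral.integral_const_mul, integral_pow]
      norm_num
    have hcast : ‖((n + 1 : ℕ) : ℂ)‖ = ((n : ℝ) + 1) := by
      rw [Complex.norm_natCast]; push_cast; ring
    calc ‖Xup q (n + 1) x‖
        = ‖((n + 1 : ℕ) : ℂ)‖ *
            ‖∫ ξ in (0:ℝ)..x, Xup q n ξ * (if Even (n + 1) then q ξ else 1)‖ := by
          rw [show Xup q (n+1) x = ((n + 1 : ℕ) : ℂ) *
            ∫ ξ in (0:ℝ)..x, Xup q n ξ * (if Even (n + 1) then q ξ else 1) from rfl, norm_mul]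
      _ ≤ ((n : ℝ) + 1) * |∫ t in (0:ℝ)..x, M ^ (n + 1) * t ^ n| := by
          rw [hcast]; exact mul_le_mul_of_nonneg_left hint (by positivity)
      _ = ((n : ℝ) + 1) * (M ^ (n + 1) * (x ^ (n + 1) / (n + 1))) := by
          rw [hval, abs_of_nonneg (by positivity)]
      _ = M ^ (n + 1) * x ^ (n + 1) := by field_simp

lemma xup_congr (q q' : ℝ → ℂ) (a : ℝ) (hqq : ∀ ξ ∈ Icc (0:ℝ) a, q ξ = q' ξ) :
    ∀ n : ℕ, ∀ x ∈ Icc (0:ℝ) a, Xup q n x = Xup q' n x := by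
  intro n
  induction n with
  | zero => intro x _; rfl
  | succ n ih =>
    intro x hx
    show ((n + 1 : ℕ) : ℂ) * ∫ ξ in (0:ℝ)..x, Xup q n ξ * (if Even (n + 1) then q ξ else 1)
      = ((n + 1 : ℕ) : ℂ) * ∫ ξ in (0:ℝ)..x, Xup q' n ξ * (if Even (n + 1) then q' ξ else 1)
    congr 1
    apply intervalIntegral.integral_congr
    intro t ht
    rw [uIcc_of_le hx.1] at ht
    have ht' : t ∈ Icc (0:ℝ) a := ⟨ht.1, le_trans ht.2 hx.2⟩
    simp only []
    rw [ih t ht', hqq t ht']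

lemma u₂_congr (q q' : ℝ → ℂ) (a : ℝ) (hqq : ∀ ξ ∈ Icc (0:ℝ) a, q ξ = q' ξ) :
    ∀ x ∈ Icc (0:ℝ) a, u₂ q x = u₂ q' x := by
  intro x hx
  unfold u₂
  congr 1
  funext k
  rw [xup_congr q q' a hqq _ x hx]

/-- The terms of the series `u₂`. -/
noncomputable def gg (q : ℝ → ℂ) (k : ℕ) (x : ℝ) : ℂ :=
  Xup q (2 * k + 1) x / (Nat.factorial (2 * k + 1) : ℂ)

/-- The terms of the (formal) derivative of `u₂`. -/
noncomputable def gg1 (q : ℝ → ℂ) (k : ℕ) (x : ℝ) : ℂ :=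
  Xup q (2 * k) x / (Nat.factorial (2 * k) : ℂ)

/-- The terms of the (formal) second derivative of `u₂`. -/
noncomputable def gg2 (q : ℝ → ℂ) : ℕ → ℝ → ℂ
  | 0, _ => 0
  | (m + 1), x => Xup q (2 * m + 1) x * q x / (Nat.factorial (2 * m + 1) : ℂ)

lemma fact_cast_ne (n : ℕ) : ((Nat.factorial n : ℕ) : ℂ) ≠ 0 :=
  Nat.cast_ne_zero.mpr (Nat.factorial_ne_zero _)

lemma hasDerivAt_gg (q : ℝ → ℂ) (hq : Continuous q) (k : ℕ) (x : ℝ) :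
    HasDerivAt (gg q k) (gg1 q k x) x := by
  have h := ((xup_key q hq (2 * k)).2 x).div_const ((Nat.factorial (2 * k + 1) : ℕ) : ℂ)
  have hodd : ¬ Even (2 * k + 1) := by simp [Nat.even_add_one]
  rw [if_neg hodd] at h
  refine h.congr_deriv ?_; symm
  show Xup q (2 * k) x / ((Nat.factorial (2 * k) : ℕ) : ℂ) = _
  rw [show (2 * k + 1).factorial = (2 * k + 1) * (2 * k).factorial from Nat.factorial_succ _]
  have h2 : ((2 * k + 1 : ℕ) : ℂ) ≠ 0 := Nat.cast_ne_zero.mpr (by omega)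
  rw [Nat.cast_mul, mul_one, mul_div_mul_left _ _ h2]

lemma hasDerivAt_gg1 (q : ℝ → ℂ) (hq : Continuous q) (k : ℕ) (x : ℝ) :
    HasDerivAt (gg1 q k) (gg2 q k x) x := by
  match k with
  | 0 =>
    have : gg1 q 0 = fun _ => (1 : ℂ) := by
      funext y
      show Xup q (2 * 0) y / ((Nat.factorial (2 * 0) : ℕ) : ℂ) = 1
      norm_num [Xup]
    rw [this]
    exact hasDerivAt_const x _
  | (m + 1) =>
    have h := ((xup_key q hq (2 * m + 1)).2 x).div_const
      ((Nat.factorial (2 * m + 1 + 1) : ℕ) : ℂ)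
    have heven : Even (2 * m + 1 + 1) := ⟨m + 1, by ring⟩
    rw [if_pos heven] at h
    have : HasDerivAt (gg1 q (m + 1))
        ((((2 * m + 1 + 1 : ℕ) : ℂ) * (Xup q (2 * m + 1) x * q x)) /
          ((Nat.factorial (2 * m + 1 + 1) : ℕ) : ℂ)) x := h
    convert this using 1
    show Xup q (2 * m + 1) x * q x / ((Nat.factorial (2 * m + 1) : ℕ) : ℂ) = _
    rw [show (2 * m + 1 + 1).factorial = (2 * m + 1 + 1) * (2 * m + 1).factorial from
      Nat.factorial_succ _]
    have h2 : ((2 * m + 1 + 1 : ℕ) : ℂ) ≠ 0 := Nat.cast_ne_zero.mpr (by omega)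
    rw [Nat.cast_mul, mul_div_mul_left _ _ h2]

/-- u₂(x) = Σ_{odd n ≥ 1} X^(n)(x)/n! is twice differentiable on (0,a)
and satisfies −u₂''(x) + q(x) u₂(x) = 0 for all x ∈ (0,a). -/
theorem stmt_7 (a : ℝ) (ha : 0 < a) (q : ℝ → ℂ) (hq : ContinuousOn q (Set.Icc 0 a)) :
    (∀ x ∈ Set.Ioo 0 a, DifferentiableAt ℝ (u₂ q) x ∧ DifferentiableAt ℝ (deriv (u₂ q)) x) ∧
    ∀ x ∈ Set.Ioo 0 a, -(deriv (deriv (u₂ q)) x) + q x * u₂ q x = 0 := by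
  -- continuous extension `Q` of `q` to all of `ℝ`
  have hPmem : ∀ ξ : ℝ, min (max ξ 0) a ∈ Icc (0:ℝ) a :=
    fun ξ => ⟨le_min (le_max_right _ _) ha.le, min_le_right _ _⟩
  set Q : ℝ → ℂ := fun ξ => q (min (max ξ 0) a) with hQdef
  have hQc : Continuous Q := hq.comp_continuous (by continuity) hPmem
  have hqQ : ∀ ξ ∈ Icc (0:ℝ) a, q ξ = Q ξ := by
    intro ξ hξ
    simp only [hQdef]
    rw [max_eq_left hξ.1, min_eq_left hξ.2]
  -- a bound `M` for `Q` on `[0, a]`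
  obtain ⟨C, hC⟩ := isCompact_Icc.exists_bound_of_continuousOn
    (hQc.continuousOn : ContinuousOn Q (Icc (0:ℝ) a))
  set M : ℝ := max C 1 with hMdef
  have hM1 : (1:ℝ) ≤ M := le_max_right _ _
  have hM0 : (0:ℝ) ≤ M := le_trans zero_le_one hM1
  have hM : ∀ ξ ∈ Icc (0:ℝ) a, ‖Q ξ‖ ≤ M := fun ξ hξ => (hC ξ hξ).trans (le_max_left _ _)
  have hbd := xup_bound Q a M hM1 hM
  -- norm bounds for the terms
  have hXb : ∀ n : ℕ, ∀ x ∈ Icc (0:ℝ) a, ‖Xup Q n x‖ ≤ (M * a) ^ n := by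
    intro n x hx
    calc ‖Xup Q n x‖ ≤ M ^ n * x ^ n := hbd n x hx
      _ ≤ M ^ n * a ^ n := by
          apply mul_le_mul_of_nonneg_left _ (by positivity)
          exact pow_le_pow_left₀ hx.1 hx.2 n
      _ = (M * a) ^ n := (mul_pow M a n).symm
  have hfacpos : ∀ n : ℕ, (0:ℝ) < (n.factorial : ℝ) :=
    fun n => Nat.cast_pos.mpr (Nat.factorial_pos n)
  have hggb : ∀ k : ℕ, ∀ x ∈ Icc (0:ℝ) a,
      ‖gg Q k x‖ ≤ (M * a) ^ (2 * k + 1) / ((2 * k + 1).factorial : ℝ) := by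
    intro k x hx
    show ‖Xup Q (2 * k + 1) x / ((Nat.factorial (2 * k + 1) : ℕ) : ℂ)‖ ≤ _
    rw [norm_div, Complex.norm_natCast]
    have := hfacpos (2 * k + 1)
    gcongr
    exact hXb _ x hx
  have hgg1b : ∀ k : ℕ, ∀ x ∈ Icc (0:ℝ) a,
      ‖gg1 Q k x‖ ≤ (M * a) ^ (2 * k) / ((2 * k).factorial : ℝ) := by
    intro k x hx
    show ‖Xup Q (2 * k) x / ((Nat.factorial (2 * k) : ℕ) : ℂ)‖ ≤ _
    rw [norm_div, Complex.norm_natCast]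
    have := hfacpos (2 * k)
    gcongr
    exact hXb _ x hx
  -- the bound for the second-derivative terms
  set u2fun : ℕ → ℝ := fun k => match k with
    | 0 => 0
    | (m + 1) => M * ((M * a) ^ (2 * m + 1) / ((2 * m + 1).factorial : ℝ)) with hu2fun
  have hgg2b : ∀ k : ℕ, ∀ x ∈ Icc (0:ℝ) a, ‖gg2 Q k x‖ ≤ u2fun k := by
    intro k x hx
    match k with
    | 0 => show ‖(0:ℂ)‖ ≤ (0:ℝ); simp
    | (m + 1) =>
      show ‖Xup Q (2 * m + 1) x * Q x / ((Nat.factorial (2 * m + 1) : ℕ) : ℂ)‖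
        ≤ M * ((M * a) ^ (2 * m + 1) / ((2 * m + 1).factorial : ℝ))
      rw [norm_div, norm_mul, Complex.norm_natCast]
      have hf := hfacpos (2 * m + 1)
      calc ‖Xup Q (2 * m + 1) x‖ * ‖Q x‖ / ((2 * m + 1).factorial : ℝ)
          ≤ (M * a) ^ (2 * m + 1) * M / ((2 * m + 1).factorial : ℝ) := by
            gcongr
            · exact hXb _ x hx
            · exact hM x hx
        _ = M * ((M * a) ^ (2 * m + 1) / ((2 * m + 1).factorial : ℝ)) := by ring
  -- summability of the bounds
  have hsuma : ∀ j : ℕ → ℕ, Function.Injective j →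
      Summable (fun k : ℕ => (M * a) ^ (j k) / ((j k).factorial : ℝ)) :=
    fun j hj => (Real.summable_pow_div_factorial (M * a)).comp_injective hj
  have hj1 : Function.Injective (fun k : ℕ => 2 * k) := fun k₁ k₂ h => by
    have h' : 2 * k₁ = 2 * k₂ := h; omega
  have hj2 : Function.Injective (fun k : ℕ => 2 * k + 1) := fun k₁ k₂ h => by
    have h' : 2 * k₁ + 1 = 2 * k₂ + 1 := h; omega
  have hsumu1 : Summable (fun k : ℕ => (M * a) ^ (2 * k) / ((2 * k).factorial : ℝ)) :=
    hsuma (fun k => 2 * k) hj1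
  have hsumu2 : Summable u2fun := by
    rw [← summable_nat_add_iff 1]
    have : (fun n : ℕ => u2fun (n + 1))
        = fun n : ℕ => M * ((M * a) ^ (2 * n + 1) / ((2 * n + 1).factorial : ℝ)) := rfl
    rw [this]
    exact (hsuma (fun k => 2 * k + 1) hj2).mul_left M
  -- the point a/2
  have hx0mem : a / 2 ∈ Ioo (0:ℝ) a := ⟨by linarith, by linarith⟩
  have hx0mem' : a / 2 ∈ Icc (0:ℝ) a := Ioo_subset_Icc_self hx0mem
  have hsum0 : Summable (fun k => gg Q k (a / 2)) :=
    Summable.of_norm_bounded (hsuma (fun k => 2 * k + 1) hj2) (fun k => hggb k _ hx0mem')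
  have hsum0' : Summable (fun k => gg1 Q k (a / 2)) :=
    Summable.of_norm_bounded hsumu1 (fun k => hgg1b k _ hx0mem')
  -- first derivative, term by term
  have H1 : ∀ x ∈ Ioo (0:ℝ) a,
      HasDerivAt (fun z => ∑' k, gg Q k z) (∑' k, gg1 Q k x) x := by
    intro x hx
    exact hasDerivAt_tsum_of_isPreconnected hsumu1 isOpen_Ioo isPreconnected_Ioo
      (fun k y _ => hasDerivAt_gg Q hQc k y)
      (fun k y hy => hgg1b k y (Ioo_subset_Icc_self hy)) hx0mem hsum0 hx
  have H1' : ∀ x ∈ Ioo (0:ℝ) a, HasDerivAt (u₂ Q) (∑' k, gg1 Q k x) x := H1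
  -- second derivative, term by term
  have H2 : ∀ x ∈ Ioo (0:ℝ) a,
      HasDerivAt (fun z => ∑' k, gg1 Q k z) (∑' k, gg2 Q k x) x := by
    intro x hx
    exact hasDerivAt_tsum_of_isPreconnected hsumu2 isOpen_Ioo isPreconnected_Ioo
      (fun k y _ => hasDerivAt_gg1 Q hQc k y)
      (fun k y hy => hgg2b k y (Ioo_subset_Icc_self hy)) hx0mem hsum0' hx
  -- transferring from Q back to q
  have hevq : ∀ x ∈ Ioo (0:ℝ) a, u₂ q =ᶠ[nhds x] u₂ Q := fun x hx =>
    eventually_of_mem (isOpen_Ioo.mem_nhds hx)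
      (fun y hy => u₂_congr q Q a hqQ y (Ioo_subset_Icc_self hy))
  have hd1 : ∀ x ∈ Ioo (0:ℝ) a, HasDerivAt (u₂ q) (∑' k, gg1 Q k x) x :=
    fun x hx => (H1' x hx).congr_of_eventuallyEq (hevq x hx)
  have hev1 : ∀ x ∈ Ioo (0:ℝ) a, deriv (u₂ q) =ᶠ[nhds x] (fun y => ∑' k, gg1 Q k y) :=
    fun x hx => eventually_of_mem (isOpen_Ioo.mem_nhds hx) (fun y hy => (hd1 y hy).deriv)
  have hd2 : ∀ x ∈ Ioo (0:ℝ) a, HasDerivAt (deriv (u₂ q)) (∑' k, gg2 Q k x) x :=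
    fun x hx => (H2 x hx).congr_of_eventuallyEq (hev1 x hx)
  refine ⟨fun x hx => ⟨(hd1 x hx).differentiableAt, (hd2 x hx).differentiableAt⟩, ?_⟩
  intro x hx
  have hxI : x ∈ Icc (0:ℝ) a := Ioo_subset_Icc_self hx
  have hderiv2 : deriv (deriv (u₂ q)) x = ∑' k, gg2 Q k x := (hd2 x hx).deriv
  have hsum2x : Summable (fun k => gg2 Q k x) :=
    Summable.of_norm_bounded hsumu2 (fun k => hgg2b k x hxI)
  have htsum : ∑' k, gg2 Q k x = Q x * u₂ Q x := by
    rw [Summable.tsum_eq_zero_add hsum2x]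
    show (0:ℂ) + ∑' m : ℕ, gg2 Q (m + 1) x = _
    rw [zero_add]
    have heq : ∀ m : ℕ, gg2 Q (m + 1) x
        = Q x * (Xup Q (2 * m + 1) x / ((Nat.factorial (2 * m + 1) : ℕ) : ℂ)) := by
      intro m
      show Xup Q (2 * m + 1) x * Q x / ((Nat.factorial (2 * m + 1) : ℕ) : ℂ) = _
      ring
    rw [tsum_congr heq, tsum_mul_left]
    rfl
  rw [hderiv2, htsum, hqQ x hxI, u₂_congr q Q a hqQ x hxI]
  ring
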